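/- Let G be a graph on n vertices containing no path on k vertices. Then for every t ≥ 2, the number of t-cliques of G satisfies N_t(G) ≤ (n/(k-1)) · C(k-1, t). -/

import Mathlib

open Finset List

section lowdeg
variable {V : Type*} [DecidableEq V]

private lemma rotate_chain'2 {R : V → V → Prop} {C : List V} (hC : C.Chain' R)
    (hwrap : ∀ a ∈ C.getLast?, ∀ b ∈ C.head?, R a b) {m : ℕ} (hm : m ≤ C.length) :
    (C.rotate m).Chain' R := by
  rw [List.rotate_eq_drop_append_take hm]; simp only [List.Chain', List.isChain_append]
  refine ⟨hC.drop m, hC.take m, ?_⟩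
  intro x hx y hy
  have hmpos : 0 < m := by
    by_contra h
    have : m = 0 := by omega
    subst this
    simp at hy
  have hmlt : m < C.length := by
    rcases Nat.lt_or_ge m C.length with h | h
    · exact h
    · exfalso
      rw [List.drop_eq_nil_of_le h] at hx
      simp at hx
  have hx' : x ∈ C.getLast? := by
    rw [List.getLast?_eq_getElem?] at hx ⊢
    rw [List.length_drop, List.getElem?_drop] at hx
    have : m + (C.length - m - 1) = C.length - 1 := by omega
    rwa [this] at hx
  have hy' : y ∈ C.head? := by
    rw [List.head?_eq_getElem?] at hy ⊢
    rwa [List.getElem?_take, if_pos hmpos] at hy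
  exact hwrap x hx' y hy'

private lemma lowdeg (G : SimpleGraph V) (k : ℕ)
    (hfree : ∀ l : List V, l.Chain' G.Adj → l.Nodup → l.length ≤ k - 1)
    (H : Finset V) (x : V) (hx : x ∈ H)
    (hconn : ∀ y ∈ H, Relation.ReflTransGen (fun a b => a ∈ H ∧ b ∈ H ∧ G.Adj a b) x y)
    (hbig : k - 1 < H.card) (hk : 2 ≤ k) :
    ∃ v ∈ H, ∀ D : Finset V, (∀ y ∈ D, y ∈ H ∧ G.Adj v y) → 2 * D.card ≤ k - 2 := by
  classical
  set Good := fun l : List V => l.Chain' G.Adj ∧ l.Nodup ∧ ∀ y ∈ l, y ∈ H with hGoodDef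
  set S := {m | ∃ l, Good l ∧ l.length = m} with hSdef
  have hbdd : BddAbove S := by
    refine ⟨k, ?_⟩
    rintro m ⟨l, ⟨h1, h2, _⟩, rfl⟩
    exact le_trans (hfree l h1 h2) (by omega)
  have hxS : (1 : ℕ) ∈ S := ⟨[x], ⟨List.isChain_singleton x, by simp, by simpa using hx⟩, rfl⟩
  obtain ⟨l, hGl, hlen⟩ := Nat.sSup_mem ⟨1, hxS⟩ hbdd
  have hmax : ∀ l' : List V, Good l' → l'.length ≤ l.length := fun l' h =>
    hlen ▸ le_csSup hbdd ⟨l', h, rfl⟩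
  have hp1 : 1 ≤ l.length := hlen ▸ le_csSup hbdd hxS
  have hlne : l ≠ [] := by
    intro h; rw [h] at hp1; simp at hp1
  have hpk : l.length ≤ k - 1 := hfree l hGl.1 hGl.2.1
  set v1 := l.head hlne with hv1
  set vp := l.getLast hlne with hvp
  have hv1H : v1 ∈ H := hGl.2.2 _ (List.head_mem hlne)
  have hvpH : vp ∈ H := hGl.2.2 _ (List.getLast_mem hlne)
  have hheadq : l[0]? = some v1 := by
    rw [← List.head?_eq_getElem?, List.head?_eq_head hlne]
  have hlastq : l[l.length - 1]? = some vp := by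
    rw [← List.getLast?_eq_getElem?, List.getLast?_eq_getLast hlne]
  have hidxq : ∀ y ∈ l, l[l.idxOf y]? = some y := fun y hy => by
    rw [List.getElem?_eq_getElem (List.idxOf_lt_length_iff.mpr hy), List.getElem_idxOf]
  -- front and back maximality
  have hfront : ∀ y, y ∈ H → G.Adj v1 y → y ∈ l := by
    intro y hyH hadj
    by_contra hyl
    have hGood : Good (y :: l) := by
      refine ⟨?_, ?_, ?_⟩
      · simp only [List.Chain', List.isChain_cons]
        refine ⟨?_, hGl.1⟩
        intro b hb
        rw [List.head?_eq_head hlne] at hb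
        simp only [Option.mem_some_iff] at hb
        subst hb
        exact hadj.symm
      · exact List.nodup_cons.mpr ⟨hyl, hGl.2.1⟩
      · intro z hz
        rcases List.mem_cons.mp hz with rfl | hz
        · exact hyH
        · exact hGl.2.2 z hz
    have := hmax _ hGood
    simp only [List.length_cons] at this
    omega
  have hback : ∀ y, y ∈ H → G.Adj vp y → y ∈ l := by
    intro y hyH hadj
    by_contra hyl
    have hGood : Good (l ++ [y]) := by
      refine ⟨?_, ?_, ?_⟩
      · simp only [List.Chain', List.isChain_append]
        refine ⟨hGl.1, List.isChain_singleton y, ?_⟩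
        intro a ha b hb
        rw [List.getLast?_eq_getLast hlne] at ha
        simp only [Option.mem_some_iff] at ha
        subst ha
        simp only [List.head?_cons, Option.mem_some_iff] at hb
        subst hb
        exact hadj
      · rw [List.nodup_append]
        refine ⟨hGl.2.1, List.nodup_singleton y, ?_⟩
        intro a ha b hb
        simp only [List.mem_singleton] at hb
        subst hb
        exact fun h => hyl (h ▸ ha)
      · intro z hz
        rcases List.mem_append.mp hz with hz | hz
        · exact hGl.2.2 z hz
        · simp only [List.mem_singleton] at hz
          subst hz
          exact hyH
    have := hmax _ hGood
    simp only [List.length_append, List.length_singleton] at this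
    omega
  -- case split
  by_cases h1 : ∀ D : Finset V, (∀ y ∈ D, y ∈ H ∧ G.Adj v1 y) → 2 * D.card ≤ k - 2
  · exact ⟨v1, hv1H, h1⟩
  by_cases h2 : ∀ D : Finset V, (∀ y ∈ D, y ∈ H ∧ G.Adj vp y) → 2 * D.card ≤ k - 2
  · exact ⟨vp, hvpH, h2⟩
  exfalso
  push_neg at h1 h2
  obtain ⟨D1, hD1, hd1⟩ := h1
  obtain ⟨D2, hD2, hd2⟩ := h2
  -- index sets
  set A := (Finset.range (l.length - 1)).filter (fun i => G.Adj v1 (l.getD (i + 1) x)) with hA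
  set B := (Finset.range (l.length - 1)).filter (fun i => G.Adj vp (l.getD i x)) with hB
  have hidx_ne0 : ∀ y, G.Adj v1 y → y ∈ l → l.idxOf y ≠ 0 := by
    intro y hadj hyl h0
    have hq := hidxq y hyl
    rw [h0, hheadq] at hq
    simp only [Option.some_inj] at hq
    rw [hq] at hadj
    exact G.irrefl hadj
  have hidx_nelast : ∀ y, G.Adj vp y → y ∈ l → l.idxOf y ≠ l.length - 1 := by
    intro y hadj hyl h0
    have hq := hidxq y hyl
    rw [h0, hlastq] at hq
    simp only [Option.some_inj] at hq
    rw [hq] at hadj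
    exact G.irrefl hadj
  have hD1A : D1.card ≤ A.card := by
    apply Finset.card_le_card_of_injOn (fun y => l.idxOf y - 1)
    · intro y hy
      obtain ⟨hyH, hadj⟩ := hD1 y hy
      have hyl : y ∈ l := hfront y hyH hadj
      have hidx : l.idxOf y < l.length := List.idxOf_lt_length_iff.mpr hyl
      have hne0 := hidx_ne0 y hadj hyl
      simp only [hA, Finset.mem_coe, Finset.mem_filter, Finset.mem_range]
      refine ⟨by omega, ?_⟩
      have h11 : l.idxOf y - 1 + 1 = l.idxOf y := by omega
      rw [h11, List.getD_eq_getElem l x hidx, List.getElem_idxOf]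
      exact hadj
    · intro y1 hy1 y2 hy2 heq
      simp only [Finset.mem_coe] at hy1 hy2
      simp only at heq
      obtain ⟨hy1H, hadj1⟩ := hD1 y1 hy1
      obtain ⟨hy2H, hadj2⟩ := hD1 y2 hy2
      have hyl1 : y1 ∈ l := hfront y1 hy1H hadj1
      have hyl2 : y2 ∈ l := hfront y2 hy2H hadj2
      have hne1 := hidx_ne0 y1 hadj1 hyl1
      have hne2 := hidx_ne0 y2 hadj2 hyl2
      have : l.idxOf y1 = l.idxOf y2 := by omega
      exact (List.idxOf_inj hyl1).mp this
  have hD2B : D2.card ≤ B.card := by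
    apply Finset.card_le_card_of_injOn (fun y => l.idxOf y)
    · intro y hy
      obtain ⟨hyH, hadj⟩ := hD2 y hy
      have hyl : y ∈ l := hback y hyH hadj
      have hidx : l.idxOf y < l.length := List.idxOf_lt_length_iff.mpr hyl
      have hnel := hidx_nelast y hadj hyl
      simp only [hB, Finset.mem_coe, Finset.mem_filter, Finset.mem_range]
      refine ⟨by omega, ?_⟩
      rw [List.getD_eq_getElem l x hidx, List.getElem_idxOf]
      exact hadj
    · intro y1 hy1 y2 hy2 heq
      simp only [Finset.mem_coe] at hy1 hy2
      simp only at heq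
      obtain ⟨hy1H, hadj1⟩ := hD2 y1 hy1
      obtain ⟨hy2H, hadj2⟩ := hD2 y2 hy2
      exact (List.idxOf_inj (hback y1 hy1H hadj1)).mp heq
  -- pigeonhole
  have hunion : (A ∪ B).card ≤ l.length - 1 := by
    have hsub : A ∪ B ⊆ Finset.range (l.length - 1) := by
      intro i hi
      rcases Finset.mem_union.mp hi with hi | hi
      · exact Finset.mem_of_mem_filter i hi
      · exact Finset.mem_of_mem_filter i hi
    simpa using Finset.card_le_card hsub
  have hABcard := Finset.card_union_add_card_inter A B
  have hinter : 0 < (A ∩ B).card := by omega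
  obtain ⟨i, hi⟩ := Finset.card_pos.mp hinter
  rw [Finset.mem_inter] at hi
  obtain ⟨hiA, hiB⟩ := hi
  rw [hA, Finset.mem_filter, Finset.mem_range] at hiA
  rw [hB, Finset.mem_filter, Finset.mem_range] at hiB
  obtain ⟨hip, hadjA⟩ := hiA
  obtain ⟨_, hadjB⟩ := hiB
  -- crossing edge
  have hcross : ∃ u w, u ∈ H ∧ u ∉ l ∧ w ∈ l ∧ G.Adj u w := by
    by_contra hno
    push_neg at hno
    have key : ∀ b, Relation.ReflTransGen (fun a b => a ∈ H ∧ b ∈ H ∧ G.Adj a b) x b →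
        (b ∈ l ↔ x ∈ l) := by
      intro b hb
      induction hb with
      | refl => exact Iff.rfl
      | @tail b' c' hxb hbc ih =>
        obtain ⟨hbH, hcH, hadj⟩ := hbc
        constructor
        · intro hcl
          by_contra hxl
          have hbl : b' ∉ l := fun h => hxl (ih.mp h)
          exact hno b' c' hbH hbl hcl hadj
        · intro hxl
          have hbl : b' ∈ l := ih.mpr hxl
          by_contra hcl
          exact hno c' b' hcH hcl hbl hadj.symm
    have hxl : x ∈ l := (key v1 (hconn v1 hv1H)).mp (List.head_mem hlne)
    have : ∃ y ∈ H, y ∉ l := by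
      by_contra hally
      push_neg at hally
      have hsub : H ⊆ l.toFinset := fun y hy => List.mem_toFinset.mpr (hally y hy)
      have := Finset.card_le_card hsub
      rw [List.toFinset_card_of_nodup hGl.2.1] at this
      omega
    obtain ⟨y, hyH, hyl⟩ := this
    exact hyl ((key y (hconn y hyH)).mpr hxl)
  obtain ⟨u, w, huH, hul, hwl, huw⟩ := hcross
  -- the cycle
  set C := l.take (i + 1) ++ (l.drop (i + 1)).reverse with hC
  have hperm : C.Perm l := by
    calc C ~ l.take (i + 1) ++ l.drop (i + 1) :=
          List.Perm.append_left _ (List.reverse_perm _)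
      _ = l := List.take_append_drop _ _
  have hi1p : i + 1 < l.length := by omega
  have hdrop_len : (l.drop (i + 1)).length = l.length - (i + 1) := List.length_drop
  have hgetDi : l.getD i x = l[i]'(by omega) := List.getD_eq_getElem l x (by omega)
  have hgetDi1 : l.getD (i + 1) x = l[i + 1]'(by omega) := List.getD_eq_getElem l x (by omega)
  have hvplast : vp = l[l.length - 1]'(by omega) := by
    rw [hvp, List.getLast_eq_getElem]
  have hv1head : v1 = l[0]'(by omega) := by
    rw [hv1, List.head_eq_getElem]
  have hchainC : C.Chain' G.Adj := by
    simp only [hC, List.Chain', List.isChain_append]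
    refine ⟨hGl.1.take _, ?_, ?_⟩
    · rw [List.isChain_reverse]
      exact (hGl.1.drop _).imp (fun a b h => h.symm)
    · intro a ha b hb
      rw [List.getLast?_eq_getElem?, List.length_take] at ha
      have hmin : (i + 1) ⊓ l.length - 1 = i := by omega
      rw [hmin, List.getElem?_take, if_pos (by omega : i < i + 1),
        List.getElem?_eq_getElem (by omega : i < l.length)] at ha
      simp only [Option.mem_some_iff] at ha
      subst ha
      rw [List.head?_reverse, List.getLast?_eq_getElem?, hdrop_len, List.getElem?_drop] at hb
      have h99 : i + 1 + (l.length - (i + 1) - 1) = l.length - 1 := by omega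
      rw [h99, List.getElem?_eq_getElem (by omega : l.length - 1 < l.length)] at hb
      simp only [Option.mem_some_iff] at hb
      subst hb
      rw [hgetDi] at hadjB
      rw [hvplast] at hadjB
      exact hadjB.symm
  have hwrapC : ∀ a ∈ C.getLast?, ∀ b ∈ C.head?, G.Adj a b := by
    intro a ha b hb
    have hrev_ne : (l.drop (i + 1)).reverse ≠ [] := by
      simp only [ne_eq, List.reverse_eq_nil_iff]
      intro h
      have := congrArg List.length h
      rw [hdrop_len] at this
      simp at this
      omega
    rw [hC, List.getLast?_append_of_ne_nil _ hrev_ne, List.getLast?_reverse, List.head?_drop,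
      List.getElem?_eq_getElem (by omega : i + 1 < l.length)] at ha
    simp only [Option.mem_some_iff] at ha
    subst ha
    rw [hC, List.head?_append, List.head?_eq_getElem?, List.getElem?_take,
      if_pos (by omega : (0 : ℕ) < i + 1), hheadq] at hb
    rw [show (some v1).or ((l.drop (i + 1)).reverse.head?) = some v1 from rfl] at hb
    simp only [Option.mem_some_iff] at hb
    subst hb
    rw [hgetDi1] at hadjA
    exact hadjA.symm
  -- rotate to start at w
  have hwC : w ∈ C := hperm.mem_iff.mpr hwl
  have hmlt : C.idxOf w < C.length := List.idxOf_lt_length_iff.mpr hwC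
  set rot := C.rotate (C.idxOf w) with hrot
  have hrothead : rot.head? = some w := by
    rw [hrot, List.rotate_eq_drop_append_take (le_of_lt hmlt), List.head?_append,
      List.head?_drop, List.getElem?_eq_getElem hmlt, List.getElem_idxOf hmlt]
    rfl
  have hrotchain : rot.Chain' G.Adj := rotate_chain'2 hchainC hwrapC (le_of_lt hmlt)
  have hrotperm : rot.Perm l := (List.rotate_perm C _).trans hperm
  have hGoodnew : Good (u :: rot) := by
    refine ⟨?_, ?_, ?_⟩
    · simp only [List.Chain', List.isChain_cons]
      refine ⟨?_, hrotchain⟩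
      intro b hb
      rw [hrothead] at hb
      simp only [Option.mem_some_iff] at hb
      subst hb
      exact huw
    · rw [List.nodup_cons]
      exact ⟨fun h => hul (hrotperm.mem_iff.mp h), hrotperm.nodup_iff.mpr hGl.2.1⟩
    · intro z hz
      rcases List.mem_cons.mp hz with rfl | hz
      · exact huH
      · exact hGl.2.2 z (hrotperm.mem_iff.mp hz)
  have hfin := hmax _ hGoodnew
  simp only [List.length_cons] at hfin
  have hrl : rot.length = l.length := by rw [hrot, List.length_rotate, hperm.length_eq]
  omega



end lowdeg

private lemma walk_of_chain {V : Type*} (G : SimpleGraph V) :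
    ∀ (l : List V) (a : V), List.Chain G.Adj a l →
      ∃ (b : V) (w : G.Walk a b), w.support = a :: l := by
  intro l
  induction l with
  | nil => exact fun a _ => ⟨a, .nil, rfl⟩
  | cons c l ih =>
    intro a h
    simp only [List.Chain, List.isChain_cons_cons] at h
    obtain ⟨b, w, hw⟩ := ih c h.2
    exact ⟨b, .cons h.1 w, by simp [hw]⟩

private lemma luo_arith' {a b r : ℕ} (hab : a ≤ b) (hr : 1 ≤ r) :
    (r + 1) * a.choose r ≤ (a + b).choose r := by
  rw [Nat.add_choose_eq]
  have hmem : ({(r, 0), (r - 1, 1)} : Finset (ℕ × ℕ)) ⊆ Finset.HasAntidiagonal.antidiagonal r := by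
    intro p hp
    simp only [Finset.mem_insert, Finset.mem_singleton] at hp
    rcases hp with rfl | rfl <;> simp [Nat.mem_antidiagonal] <;> omega
  calc (r + 1) * a.choose r = a.choose r + r * a.choose r := by ring
    _ ≤ a.choose r * b.choose 0 + a.choose (r - 1) * b.choose 1 := by
        have h1 : a.choose r * r ≤ a.choose (r - 1) * a := by
          obtain ⟨r', rfl⟩ : ∃ r', r = r' + 1 := ⟨r - 1, by omega⟩
          rw [Nat.choose_succ_right_eq]
          simp only [Nat.add_sub_cancel]
          exact Nat.mul_le_mul_left _ (Nat.sub_le _ _)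
        have h2 : a.choose (r - 1) * a ≤ a.choose (r - 1) * b := Nat.mul_le_mul_left _ hab
        simp only [Nat.choose_zero_right, Nat.choose_one_right, mul_one]
        rw [mul_comm r]
        omega
    _ = ∑ ij ∈ ({(r, 0), (r - 1, 1)} : Finset (ℕ × ℕ)), a.choose ij.1 * b.choose ij.2 := by
        rw [Finset.sum_insert (by simp), Finset.sum_singleton]
    _ ≤ ∑ ij ∈ Finset.HasAntidiagonal.antidiagonal r, a.choose ij.1 * b.choose ij.2 :=
        Finset.sum_le_sum_of_subset hmem


private lemma luo_count {V : Type*} [Fintype V] [DecidableEq V]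
    (G : SimpleGraph V) [DecidableRel G.Adj] (k t : ℕ) (hk : 2 ≤ k) (ht : 2 ≤ t)
    (hfree : ∀ l : List V, l.Chain' G.Adj → l.Nodup → l.length ≤ k - 1) :
    ∀ (m : ℕ) (s : Finset V), s.card ≤ m →
      t * ((G.cliqueFinset t).filter (fun c => c ⊆ s)).card ≤
        s.card * (k - 2).choose (t - 1) := by
  classical
  have hempty : ∀ s : Finset V, s.card = 0 →
      t * ((G.cliqueFinset t).filter (fun c => c ⊆ s)).card ≤
        s.card * (k - 2).choose (t - 1) := by
    intro s hs
    rw [Finset.card_eq_zero] at hs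
    subst hs
    have : ((G.cliqueFinset t).filter (fun c => c ⊆ (∅ : Finset V))) = ∅ := by
      apply Finset.filter_eq_empty_iff.mpr
      intro c hc hsub
      have hcard := (SimpleGraph.mem_cliqueFinset_iff.mp hc).card_eq
      have : c = ∅ := Finset.subset_empty.mp hsub
      rw [this] at hcard
      simp at hcard
      omega
    rw [this]
    simp
  intro m
  induction m with
  | zero =>
    intro s hs
    exact hempty s (by omega)
  | succ m ih =>
    intro s hs
    rcases s.eq_empty_or_nonempty with rfl | ⟨x, hxs⟩
    · exact hempty ∅ (by simp)
    set r := fun a b : V => a ∈ s ∧ b ∈ s ∧ G.Adj a b with hrdef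
    set H := s.filter (fun y => Relation.ReflTransGen r x y) with hHdef
    have hHsub : H ⊆ s := Finset.filter_subset _ _
    have hxH : x ∈ H := Finset.mem_filter.mpr ⟨hxs, Relation.ReflTransGen.refl⟩
    have hHne : 1 ≤ H.card := Finset.card_pos.mpr ⟨x, hxH⟩
    have hclosed : ∀ a ∈ H, ∀ b ∈ s, G.Adj a b → b ∈ H := by
      intro a ha b hb hadj
      obtain ⟨has, hreach⟩ := Finset.mem_filter.mp ha
      exact Finset.mem_filter.mpr ⟨hb, hreach.tail ⟨has, hb, hadj⟩⟩
    have hdich : ∀ c ∈ G.cliqueFinset t, c ⊆ s → (c ⊆ H ∨ c ⊆ s \ H) := by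
      intro c hc hcs
      have hclq := SimpleGraph.mem_cliqueFinset_iff.mp hc
      have hcne : c.Nonempty := by
        rw [← Finset.card_pos, hclq.card_eq]; omega
      obtain ⟨w, hw⟩ := hcne
      by_cases hwH : w ∈ H
      · left
        intro y hy
        by_cases hyw : y = w
        · rw [hyw]; exact hwH
        · have hadj : G.Adj w y := hclq.isClique (Finset.mem_coe.mpr hw)
            (Finset.mem_coe.mpr hy) (fun h => hyw h.symm)
          exact hclosed w hwH y (hcs hy) hadj
      · right
        intro y hy
        rw [Finset.mem_sdiff]
        refine ⟨hcs hy, fun hyH => hwH ?_⟩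
        by_cases hyw : y = w
        · rw [← hyw]; exact hyH
        · have hadj : G.Adj y w := hclq.isClique (Finset.mem_coe.mpr hy)
            (Finset.mem_coe.mpr hw) hyw
          exact hclosed y hyH w (hcs hw) hadj
    by_cases hHsmall : H.card ≤ k - 1
    · -- Case A : remove the whole small component
      have hsplit : (G.cliqueFinset t).filter (fun c => c ⊆ s) ⊆
          ((G.cliqueFinset t).filter (fun c => c ⊆ H)) ∪
          ((G.cliqueFinset t).filter (fun c => c ⊆ s \ H)) := by
        intro c hc
        rw [Finset.mem_filter] at hc
        rcases hdich c hc.1 hc.2 with h | h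
        · exact Finset.mem_union_left _ (Finset.mem_filter.mpr ⟨hc.1, h⟩)
        · exact Finset.mem_union_right _ (Finset.mem_filter.mpr ⟨hc.1, h⟩)
      have hNH : ((G.cliqueFinset t).filter (fun c => c ⊆ H)).card ≤ H.card.choose t := by
        rw [← Finset.card_powersetCard]
        apply Finset.card_le_card
        intro c hc
        rw [Finset.mem_filter] at hc
        exact Finset.mem_powersetCard.mpr ⟨hc.2, (SimpleGraph.mem_cliqueFinset_iff.mp hc.1).card_eq⟩
      have harithA : t * H.card.choose t ≤ H.card * (k - 2).choose (t - 1) := by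
        obtain ⟨q, hq⟩ : ∃ q, H.card = q + 1 := ⟨H.card - 1, by omega⟩
        obtain ⟨u, hu⟩ : ∃ u, t = u + 1 := ⟨t - 1, by omega⟩
        have hid := Nat.add_one_mul_choose_eq q u
        -- (q+1) * C(q, u) = C(q+1, u+1) * (u+1)
        have hmono : q.choose u ≤ (k - 2).choose u := Nat.choose_le_choose u (by omega)
        calc t * H.card.choose t = (q + 1).choose (u + 1) * (u + 1) := by
              rw [hq, hu]; ring
          _ = (q + 1) * q.choose u := by rw [← hid]
          _ ≤ (q + 1) * (k - 2).choose u := Nat.mul_le_mul_left _ hmono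
          _ = H.card * (k - 2).choose (t - 1) := by rw [hq, hu]; simp
      have hcard_sdiff : (s \ H).card = s.card - H.card := Finset.card_sdiff_of_subset hHsub
      have hih := ih (s \ H) (by omega)
      calc t * ((G.cliqueFinset t).filter (fun c => c ⊆ s)).card
          ≤ t * (((G.cliqueFinset t).filter (fun c => c ⊆ H)).card +
              ((G.cliqueFinset t).filter (fun c => c ⊆ s \ H)).card) := by
            apply Nat.mul_le_mul_left
            exact le_trans (Finset.card_le_card hsplit) (Finset.card_union_le _ _)
        _ = t * ((G.cliqueFinset t).filter (fun c => c ⊆ H)).card +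
              t * ((G.cliqueFinset t).filter (fun c => c ⊆ s \ H)).card := by ring
        _ ≤ H.card * (k - 2).choose (t - 1) + (s \ H).card * (k - 2).choose (t - 1) := by
            have h1 := le_trans (Nat.mul_le_mul_left t hNH) harithA
            exact Nat.add_le_add h1 hih
        _ = (H.card + (s \ H).card) * (k - 2).choose (t - 1) := by ring
        _ = s.card * (k - 2).choose (t - 1) := by
            have : H.card + (s \ H).card = s.card := by
              rw [hcard_sdiff]
              have := Finset.card_le_card hHsub
              omega
            rw [this]
    · -- Case B : big component, low-degree vertex
      push_neg at hHsmall
      have hupg : ∀ y, Relation.ReflTransGen r x y →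
          Relation.ReflTransGen (fun a b => a ∈ H ∧ b ∈ H ∧ G.Adj a b) x y := by
        intro y hy
        induction hy with
        | refl => exact Relation.ReflTransGen.refl
        | @tail b c hxb hbc ih2 =>
          have hbH : b ∈ H := Finset.mem_filter.mpr ⟨hbc.1, hxb⟩
          have hcH : c ∈ H := Finset.mem_filter.mpr ⟨hbc.2.1, hxb.tail hbc⟩
          exact ih2.tail ⟨hbH, hcH, hbc.2.2⟩
      obtain ⟨v, hvH, hvdeg⟩ := lowdeg G k hfree H x hxH
        (fun y hy => hupg y (Finset.mem_filter.mp hy).2) hHsmall hk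
      have hvs : v ∈ s := hHsub hvH
      set D := H.filter (fun y => G.Adj v y) with hDdef
      have hdcard : 2 * D.card ≤ k - 2 := by
        apply hvdeg
        intro y hy
        rw [hDdef, Finset.mem_filter] at hy
        exact hy
      -- cliques containing v
      have hNv : ((G.cliqueFinset t).filter (fun c => c ⊆ s ∧ v ∈ c)).card ≤
          D.card.choose (t - 1) := by
        rw [← Finset.card_powersetCard]
        apply Finset.card_le_card_of_injOn (fun c => c.erase v)
        · intro c hc
          rw [Finset.mem_coe, Finset.mem_filter] at hc
          obtain ⟨hc1, hcs, hvc⟩ := hc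
          have hclq := SimpleGraph.mem_cliqueFinset_iff.mp hc1
          apply Finset.mem_powersetCard.mpr
          constructor
          · intro y hy
            rw [Finset.mem_erase] at hy
            obtain ⟨hyv, hyc⟩ := hy
            have hadj : G.Adj v y := hclq.isClique (Finset.mem_coe.mpr hvc)
              (Finset.mem_coe.mpr hyc) (fun h => hyv h.symm)
            rw [hDdef, Finset.mem_filter]
            exact ⟨hclosed v hvH y (hcs hyc) hadj, hadj⟩
          · rw [Finset.card_erase_of_mem hvc, hclq.card_eq]
        · intro c1 hc1 c2 hc2 heq
          simp only [Finset.mem_coe, Finset.mem_filter] at hc1 hc2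
          simp only at heq
          have h1 : insert v (c1.erase v) = c1 := Finset.insert_erase hc1.2.2
          have h2 : insert v (c2.erase v) = c2 := Finset.insert_erase hc2.2.2
          rw [← h1, ← h2, heq]
      have harithB : t * D.card.choose (t - 1) ≤ (k - 2).choose (t - 1) := by
        have h1 : D.card.choose (t - 1) ≤ ((k - 2) / 2).choose (t - 1) :=
          Nat.choose_le_choose _ (by omega)
        have h2 : (t - 1 + 1) * ((k - 2) / 2).choose (t - 1) ≤
            ((k - 2) / 2 + ((k - 2) - (k - 2) / 2)).choose (t - 1) :=
          luo_arith' (by omega) (by omega)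
        have h3 : (k - 2) / 2 + ((k - 2) - (k - 2) / 2) = k - 2 := by omega
        have h4 : t - 1 + 1 = t := by omega
        rw [h3, h4] at h2
        exact le_trans (Nat.mul_le_mul_left t h1) h2
      have hsplit : (G.cliqueFinset t).filter (fun c => c ⊆ s) ⊆
          ((G.cliqueFinset t).filter (fun c => c ⊆ s ∧ v ∈ c)) ∪
          ((G.cliqueFinset t).filter (fun c => c ⊆ s.erase v)) := by
        intro c hc
        rw [Finset.mem_filter] at hc
        by_cases hvc : v ∈ c
        · exact Finset.mem_union_left _ (Finset.mem_filter.mpr ⟨hc.1, hc.2, hvc⟩)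
        · refine Finset.mem_union_right _ (Finset.mem_filter.mpr ⟨hc.1, ?_⟩)
          intro y hy
          exact Finset.mem_erase.mpr ⟨fun h => hvc (h ▸ hy), hc.2 hy⟩
      have hih := ih (s.erase v) (by rw [Finset.card_erase_of_mem hvs]; omega)
      have hscard : 1 ≤ s.card := Finset.card_pos.mpr ⟨x, hxs⟩
      calc t * ((G.cliqueFinset t).filter (fun c => c ⊆ s)).card
          ≤ t * (((G.cliqueFinset t).filter (fun c => c ⊆ s ∧ v ∈ c)).card +
              ((G.cliqueFinset t).filter (fun c => c ⊆ s.erase v)).card) := by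
            apply Nat.mul_le_mul_left
            exact le_trans (Finset.card_le_card hsplit) (Finset.card_union_le _ _)
        _ = t * ((G.cliqueFinset t).filter (fun c => c ⊆ s ∧ v ∈ c)).card +
              t * ((G.cliqueFinset t).filter (fun c => c ⊆ s.erase v)).card := by ring
        _ ≤ (k - 2).choose (t - 1) + (s.erase v).card * (k - 2).choose (t - 1) := by
            exact Nat.add_le_add (le_trans (Nat.mul_le_mul_left t hNv) harithB) hih
        _ = (1 + (s.erase v).card) * (k - 2).choose (t - 1) := by ring
        _ = s.card * (k - 2).choose (t - 1) := by
            rw [Finset.card_erase_of_mem hvs]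
            congr 1
            omega

/-- Luo: if `G` is an `n`-vertex graph containing no path on `k` vertices,
then for every `t ≥ 2`, `N_t(G) ≤ n/(k-1) · C(k-1, t)`. -/
theorem luo_cliques_paths (n k t : ℕ) (ht : 2 ≤ t)
    (G : SimpleGraph (Fin n)) [DecidableRel G.Adj]
    (hPfree : ∀ (u v : Fin n) (p : G.Walk u v), p.IsPath → p.length + 1 < k) :
    ((G.cliqueFinset t).card : ℝ) ≤ (n : ℝ) / (k - 1) * (k - 1).choose t := by
  classical
  by_cases hk : 2 ≤ k
  · -- main case
    have hfree : ∀ l : List (Fin n), l.Chain' G.Adj → l.Nodup → l.length ≤ k - 1 := by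
      intro l hc hn
      cases l with
      | nil => simp
      | cons a l' =>
        have hchain : List.Chain G.Adj a l' := hc
        obtain ⟨b, w, hw⟩ := walk_of_chain G l' a hchain
        have hpath : w.IsPath := by
          rw [SimpleGraph.Walk.isPath_def, hw]
          exact hn
        have hlen := hPfree a b w hpath
        have hsup := w.length_support
        rw [hw] at hsup
        simp only [List.length_cons] at hsup
        rw [List.length_cons]
        omega
    have hcount := luo_count G k t hk ht hfree (Finset.univ.card) Finset.univ le_rfl
    have hfilt : (G.cliqueFinset t).filter (fun c => c ⊆ Finset.univ) = G.cliqueFinset t := by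
      apply Finset.filter_true_of_mem
      intro c _
      exact Finset.subset_univ c
    rw [hfilt, Finset.card_univ, Fintype.card_fin] at hcount
    -- hcount : t * (cliqueFinset t).card ≤ n * (k-2).choose (t-1)
    have hid := Nat.add_one_mul_choose_eq (k - 2) (t - 1)
    have hk1 : k - 2 + 1 = k - 1 := by omega
    have ht1 : t - 1 + 1 = t := by omega
    rw [hk1, ht1] at hid
    -- hid : (k-1) * (k-2).choose (t-1) = (k-1).choose t * t
    have hnat : t * ((G.cliqueFinset t).card * (k - 1)) ≤ t * (n * (k - 1).choose t) := by
      calc t * ((G.cliqueFinset t).card * (k - 1))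
          = (t * (G.cliqueFinset t).card) * (k - 1) := by ring
        _ ≤ (n * (k - 2).choose (t - 1)) * (k - 1) := Nat.mul_le_mul_right _ hcount
        _ = n * ((k - 1) * (k - 2).choose (t - 1)) := by ring
        _ = n * ((k - 1).choose t * t) := by rw [hid]
        _ = t * (n * (k - 1).choose t) := by ring
    have hnat2 : (G.cliqueFinset t).card * (k - 1) ≤ n * (k - 1).choose t :=
      Nat.le_of_mul_le_mul_left hnat (by omega)
    have hkR : (0 : ℝ) < (k : ℝ) - 1 := by
      have : (2 : ℝ) ≤ (k : ℝ) := by exact_mod_cast hk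
      linarith
    rw [div_mul_eq_mul_div, le_div_iff₀ hkR]
    have hcast : ((k : ℝ) - 1) = ((k - 1 : ℕ) : ℝ) := by
      have : (1 : ℕ) ≤ k := by omega
      push_cast [Nat.cast_sub this]
      ring
    rw [hcast]
    exact_mod_cast hnat2
  · -- degenerate : k ≤ 1 forces n = 0
    have hn : n = 0 := by
      by_contra hn
      have : 0 < n := by omega
      have v : Fin n := ⟨0, this⟩
      have := hPfree v v SimpleGraph.Walk.nil SimpleGraph.Walk.IsPath.nil
      simp at this
      omega
    subst hn
    have hcard : (G.cliqueFinset t).card = 0 := by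
      rw [Finset.card_eq_zero]
      apply Finset.eq_empty_of_forall_notMem
      intro c hc
      have hcard := (SimpleGraph.mem_cliqueFinset_iff.mp hc).card_eq
      have : c.card ≤ Finset.univ.card := Finset.card_le_univ c
      rw [Finset.card_univ, Fintype.card_fin] at this
      omega
    rw [hcard]
    norm_num
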